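/- For every integer k ≥ 3, in every proper (k+1)-coloring of the graph G_k, the four vertices u, u', v, v' all receive the same color. -/
import Mathlib


open SimpleGraph

/-- The vertices of the gadget `G_k`: three cliques `U`, `W` (called `V` in the paper)
and `M` of size `k` each (the distinguished vertex `w` of `M` is `M i` with `i.val = 0`),
together with four special vertices `u, u', v, v'`. -/
inductive GkVert (k : ℕ) where
  | U : Fin k → GkVert k
  | W : Fin k → GkVert k
  | M : Fin k → GkVert k
  | u : GkVert k
  | u' : GkVert k
  | v : GkVert k
  | v' : GkVert k
deriving DecidableEq

/-- The gadget `G_k`: `U`, `W` and `M` are cliques, `u` and `u'` are complete to `U`,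
`v` and `v'` are complete to `W`, `u` and `v` are complete to `M ∖ {w}`, and
`u'` and `v'` are adjacent to `w` (where `w` is the vertex `M i` with `i.val = 0`). -/
def Gk (k : ℕ) : SimpleGraph (GkVert k) :=
  SimpleGraph.fromRel (fun a b =>
    (∃ i j, a = GkVert.U i ∧ b = GkVert.U j) ∨
    (∃ i j, a = GkVert.W i ∧ b = GkVert.W j) ∨
    (∃ i j, a = GkVert.M i ∧ b = GkVert.M j) ∨
    (∃ i, a = GkVert.u ∧ b = GkVert.U i) ∨
    (∃ i, a = GkVert.u' ∧ b = GkVert.U i) ∨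
    (∃ i, a = GkVert.v ∧ b = GkVert.W i) ∨
    (∃ i, a = GkVert.v' ∧ b = GkVert.W i) ∨
    (∃ i : Fin k, i.val ≠ 0 ∧ a = GkVert.u ∧ b = GkVert.M i) ∨
    (∃ i : Fin k, i.val ≠ 0 ∧ a = GkVert.v ∧ b = GkVert.M i) ∨
    (∃ i : Fin k, i.val = 0 ∧ a = GkVert.u' ∧ b = GkVert.M i) ∨
    (∃ i : Fin k, i.val = 0 ∧ a = GkVert.v' ∧ b = GkVert.M i))

lemma key_lemma (k : ℕ) (g : Fin k → Fin (k+1)) (hg : Function.Injective g)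
    (x y : Fin (k+1)) (hx : ∀ i, x ≠ g i) (hy : ∀ i, y ≠ g i) : x = y := by
  classical
  set S : Finset (Fin (k+1)) := Finset.univ.image g with hS
  have hcard : S.card = k := by
    rw [hS, Finset.card_image_of_injective _ hg, Finset.card_univ, Fintype.card_fin]
  have hxS : x ∈ Sᶜ := by
    simp only [hS, Finset.mem_compl, Finset.mem_image, Finset.mem_univ, true_and, not_exists]
    intro i h; exact hx i h.symm
  have hyS : y ∈ Sᶜ := by
    simp only [hS, Finset.mem_compl, Finset.mem_image, Finset.mem_univ, true_and, not_exists]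
    intro i h; exact hy i h.symm
  have hcc : Sᶜ.card ≤ 1 := by
    rw [Finset.card_compl, Fintype.card_fin, hcard]; omega
  exact Finset.card_le_one.mp hcc x hxS y hyS

theorem statement3 (k : ℕ) (hk : 3 ≤ k) (C : (Gk k).Coloring (Fin (k + 1))) :
    C GkVert.u = C GkVert.u' ∧ C GkVert.u = C GkVert.v ∧ C GkVert.u = C GkVert.v' := by
  classical
  -- adjacency facts
  have adjUU : ∀ i j : Fin k, i ≠ j → (Gk k).Adj (GkVert.U i) (GkVert.U j) := by
    intro i j hij
    exact ⟨by simp [hij], Or.inl (Or.inl ⟨i, j, rfl, rfl⟩)⟩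
  have adjWW : ∀ i j : Fin k, i ≠ j → (Gk k).Adj (GkVert.W i) (GkVert.W j) := by
    intro i j hij
    exact ⟨by simp [hij], Or.inl (Or.inr (Or.inl ⟨i, j, rfl, rfl⟩))⟩
  have adjMM : ∀ i j : Fin k, i ≠ j → (Gk k).Adj (GkVert.M i) (GkVert.M j) := by
    intro i j hij
    exact ⟨by simp [hij], Or.inl (Or.inr (Or.inr (Or.inl ⟨i, j, rfl, rfl⟩)))⟩
  have adjuU : ∀ i : Fin k, (Gk k).Adj GkVert.u (GkVert.U i) := by
    intro i
    exact ⟨by simp, Or.inl (Or.inr (Or.inr (Or.inr (Or.inl ⟨i, rfl, rfl⟩))))⟩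
  have adju'U : ∀ i : Fin k, (Gk k).Adj GkVert.u' (GkVert.U i) := by
    intro i
    exact ⟨by simp, Or.inl (Or.inr (Or.inr (Or.inr (Or.inr (Or.inl ⟨i, rfl, rfl⟩)))))⟩
  have adjvW : ∀ i : Fin k, (Gk k).Adj GkVert.v (GkVert.W i) := by
    intro i
    exact ⟨by simp, Or.inl (Or.inr (Or.inr (Or.inr (Or.inr (Or.inr (Or.inl ⟨i, rfl, rfl⟩))))))⟩
  have adjv'W : ∀ i : Fin k, (Gk k).Adj GkVert.v' (GkVert.W i) := by
    intro i
    exact ⟨by simp, Or.inl (Or.inr (Or.inr (Or.inr (Or.inr (Or.inr (Or.inr (Or.inl ⟨i, rfl, rfl⟩)))))))⟩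
  have adjuM : ∀ i : Fin k, i.val ≠ 0 → (Gk k).Adj GkVert.u (GkVert.M i) := by
    intro i hi
    exact ⟨by simp, Or.inl (Or.inr (Or.inr (Or.inr (Or.inr (Or.inr (Or.inr (Or.inr (Or.inl ⟨i, hi, rfl, rfl⟩))))))))⟩
  have adjvM : ∀ i : Fin k, i.val ≠ 0 → (Gk k).Adj GkVert.v (GkVert.M i) := by
    intro i hi
    exact ⟨by simp, Or.inl (Or.inr (Or.inr (Or.inr (Or.inr (Or.inr (Or.inr (Or.inr (Or.inr (Or.inl ⟨i, hi, rfl, rfl⟩)))))))))⟩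
  have adju'M : ∀ i : Fin k, i.val = 0 → (Gk k).Adj GkVert.u' (GkVert.M i) := by
    intro i hi
    exact ⟨by simp, Or.inl (Or.inr (Or.inr (Or.inr (Or.inr (Or.inr (Or.inr (Or.inr (Or.inr (Or.inr (Or.inl ⟨i, hi, rfl, rfl⟩))))))))))⟩
  have adjv'M : ∀ i : Fin k, i.val = 0 → (Gk k).Adj GkVert.v' (GkVert.M i) := by
    intro i hi
    exact ⟨by simp, Or.inl (Or.inr (Or.inr (Or.inr (Or.inr (Or.inr (Or.inr (Or.inr (Or.inr (Or.inr (Or.inr ⟨i, hi, rfl, rfl⟩))))))))))⟩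
  -- injectivity of C on cliques
  have injU : Function.Injective (fun i : Fin k => C (GkVert.U i)) := by
    intro i j h
    by_contra hij
    exact C.valid (adjUU i j hij) h
  have injW : Function.Injective (fun i : Fin k => C (GkVert.W i)) := by
    intro i j h
    by_contra hij
    exact C.valid (adjWW i j hij) h
  have injM : Function.Injective (fun i : Fin k => C (GkVert.M i)) := by
    intro i j h
    by_contra hij
    exact C.valid (adjMM i j hij) h
  -- u = u'
  have huu' : C GkVert.u = C GkVert.u' :=
    key_lemma k _ injU _ _ (fun i => C.valid (adjuU i)) (fun i => C.valid (adju'U i))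
  have hvv' : C GkVert.v = C GkVert.v' :=
    key_lemma k _ injW _ _ (fun i => C.valid (adjvW i)) (fun i => C.valid (adjv'W i))
  -- u avoids all of M
  have huM : ∀ i : Fin k, C GkVert.u ≠ C (GkVert.M i) := by
    intro i
    by_cases hi : i.val = 0
    · rw [huu']; exact C.valid (adju'M i hi)
    · exact C.valid (adjuM i hi)
  have hvM : ∀ i : Fin k, C GkVert.v ≠ C (GkVert.M i) := by
    intro i
    by_cases hi : i.val = 0
    · rw [hvv']; exact C.valid (adjv'M i hi)
    · exact C.valid (adjvM i hi)
  have huv : C GkVert.u = C GkVert.v := key_lemma k _ injM _ _ huM hvM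
  exact ⟨huu', huv, huv.trans hvv'⟩
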